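/- arXiv:1706.09299 — 4 statements merged into one kernel-verified Lean document; each statement's English description precedes it below -/
import Mathlib

section
/- (Zarantonello) Let X be a (complete) real Hilbert space and let F : X → X be L-Lipschitz (L > 0) and strongly monotone with constant c > 0. Then there exists a unique u ∈ X with F(u) = 0. Moreover, for any initial value u⁰ ∈ X, the fixed point iteration u^{n+1} = B(u^n), where B(x) = x − (c/L²)·F(x), converges to u. -/
open scoped RealInnerProductSpace

/-- (Zarantonello) An `L`-Lipschitz, `c`-strongly monotone operator `F` on a complete real
Hilbert space has a unique zero `u`, and for any initial value the fixed point iteration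
`u^{n+1} = B(u^n)` with `B x = x - (c/L²) • F x` converges to `u`. -/
theorem stmt2
    {X : Type*} [NormedAddCommGroup X] [InnerProductSpace ℝ X] [CompleteSpace X]
    (F : X → X) (L c : ℝ) (hL : 0 < L) (hc : 0 < c)
    (hLip : ∀ x y : X, ‖F x - F y‖ ≤ L * ‖x - y‖)
    (hmono : ∀ x y : X, c * ‖x - y‖ ^ 2 ≤ ⟪F x - F y, x - y⟫) :
    ∃ u : X, F u = 0 ∧ (∀ v : X, F v = 0 → v = u) ∧
      ∀ u0 : X,
        Filter.Tendsto (fun n => (fun x => x - (c / L ^ 2) • F x)^[n] u0)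
          Filter.atTop (nhds u) := by
  rcases subsingleton_or_nontrivial X with hS | hN
  · refine ⟨0, Subsingleton.elim _ _, fun v _ => Subsingleton.elim _ _, fun u0 => ?_⟩
    have h : (fun n => (fun x => x - (c / L ^ 2) • F x)^[n] u0) = fun _ => 0 :=
      funext fun n => Subsingleton.elim _ _
    rw [h]; exact tendsto_const_nhds
  · -- c ≤ L
    obtain ⟨x0, y0, hxy⟩ := exists_pair_ne X
    have hnz : ‖x0 - y0‖ > 0 := by
      simpa [sub_eq_zero] using hxy
    have hcL : c ≤ L := by
      have h1 : c * ‖x0 - y0‖ ^ 2 ≤ L * ‖x0 - y0‖ ^ 2 := by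
        calc c * ‖x0 - y0‖ ^ 2 ≤ ⟪F x0 - F y0, x0 - y0⟫ := hmono x0 y0
          _ ≤ ‖F x0 - F y0‖ * ‖x0 - y0‖ := real_inner_le_norm _ _
          _ ≤ (L * ‖x0 - y0‖) * ‖x0 - y0‖ :=
            mul_le_mul_of_nonneg_right (hLip x0 y0) (norm_nonneg _)
          _ = L * ‖x0 - y0‖ ^ 2 := by ring
      exact le_of_mul_le_mul_right h1 (by positivity)
    set B : X → X := fun x => x - (c / L ^ 2) • F x with hB
    set k : ℝ := Real.sqrt (1 - c ^ 2 / L ^ 2) with hk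
    have hfrac : 0 < c ^ 2 / L ^ 2 := by positivity
    have hfrac1 : c ^ 2 / L ^ 2 ≤ 1 := by
      rw [div_le_one (by positivity)]
      exact pow_le_pow_left₀ hc.le hcL 2
    have hk0 : 0 ≤ k := Real.sqrt_nonneg _
    have hk1 : k < 1 := by
      have h := Real.sqrt_lt_sqrt (show (0:ℝ) ≤ 1 - c ^ 2 / L ^ 2 by linarith)
        (show 1 - c ^ 2 / L ^ 2 < 1 by linarith)
      rwa [Real.sqrt_one] at h
    have hcontr : ∀ x y : X, ‖B x - B y‖ ≤ k * ‖x - y‖ := by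
      intro x y
      have hsq : ‖B x - B y‖ ^ 2 ≤ (1 - c ^ 2 / L ^ 2) * ‖x - y‖ ^ 2 := by
        have heq : B x - B y = (x - y) - (c / L ^ 2) • (F x - F y) := by
          simp [hB, smul_sub]; abel
        rw [heq, norm_sub_sq_real, real_inner_smul_right, norm_smul]
        have h1 : ⟪F x - F y, x - y⟫ ≥ c * ‖x - y‖ ^ 2 := hmono x y
        have h2 : ‖F x - F y‖ ≤ L * ‖x - y‖ := hLip x y
        have h3 : ‖(c / L ^ 2 : ℝ)‖ = c / L ^ 2 := by
          rw [Real.norm_eq_abs, abs_of_pos (by positivity)]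
        rw [h3]
        have h4 : (c / L ^ 2 * ‖F x - F y‖) ^ 2 ≤ (c / L ^ 2 * (L * ‖x - y‖)) ^ 2 := by
          apply pow_le_pow_left₀ (by positivity)
          exact mul_le_mul_of_nonneg_left h2 (by positivity)
        have h5 : 2 * (c / L ^ 2 * ⟪x - y, F x - F y⟫) ≥
            2 * (c / L ^ 2 * (c * ‖x - y‖ ^ 2)) := by
          have hi : ⟪x - y, F x - F y⟫ ≥ c * ‖x - y‖ ^ 2 := by
            rw [real_inner_comm]; exact hmono x y
          have ha : (0:ℝ) < c / L ^ 2 := by positivity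
          nlinarith [mul_le_mul_of_nonneg_left hi ha.le]
        have hL2 : L ^ 2 ≠ 0 := by positivity
        have h6 : (c / L ^ 2 * (L * ‖x - y‖)) ^ 2 = c ^ 2 / L ^ 2 * ‖x - y‖ ^ 2 := by
          field_simp
        have h8 : c / L ^ 2 * (c * ‖x - y‖ ^ 2) = c ^ 2 / L ^ 2 * ‖x - y‖ ^ 2 := by
          field_simp
        nlinarith [h4, h5, h6, h8]
      have : ‖B x - B y‖ ^ 2 ≤ (k * ‖x - y‖) ^ 2 := by
        rw [mul_pow, hk, Real.sq_sqrt (by linarith)]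
        exact hsq
      have h7 := Real.sqrt_le_sqrt this
      rwa [Real.sqrt_sq (norm_nonneg _), Real.sqrt_sq (by positivity)] at h7
    have hlip : LipschitzWith k.toNNReal B := by
      apply LipschitzWith.of_dist_le_mul
      intro x y
      rw [dist_eq_norm, dist_eq_norm, Real.coe_toNNReal k hk0]
      exact hcontr x y
    have hCW : ContractingWith k.toNNReal B := by
      constructor
      · rwa [← NNReal.coe_lt_one, Real.coe_toNNReal k hk0]
      · exact hlip
    set u := hCW.fixedPoint B with hu
    have hfix : B u = u := hCW.fixedPoint_isFixedPt
    have hFu : F u = 0 := by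
      have : (c / L ^ 2) • F u = 0 := by
        have := hfix
        simp only [hB] at this
        rw [sub_eq_self] at this
        exact this
      have hne : (c / L ^ 2 : ℝ) ≠ 0 := by positivity
      exact (smul_eq_zero.mp this).resolve_left hne
    refine ⟨u, hFu, fun v hv => ?_, fun u0 => ?_⟩
    · apply hCW.fixedPoint_unique
      show B v = v
      simp [hB, hv]
    · exact hCW.tendsto_iterate_fixedPoint u0
end

section
/- Let X be a (complete) real Hilbert space, let F : X → X be L-Lipschitz (L > 0) and strongly monotone with constant c > 0, set B(x) = x − (c/L²)·F(x) and α = √(1 − c²/L²), and assume α ∈ (0,1). Let u ∈ X be the unique zero of F. Let η_h ≥ 0 and let (u^n) and (u_h^n) be sequences in X with u_h^0 = u^0, u^{n+1} = B(u^n) for all n, and |⟪B(u_h^n) − u_h^{n+1}, v⟫| ≤ η_h‖v‖ for all v ∈ X and all n. Then for all n ∈ ℕ the a priori error estimate ‖u − u_h^n‖ ≤ (1/(1 − α))·(αⁿ·‖u¹ − u⁰‖ + η_h) holds. -/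
open scoped RealInnerProductSpace

/-- A priori error estimate: if `F` is `L`-Lipschitz and `c`-strongly monotone on a complete
real Hilbert space, `B x = x - (c/L²) • F x`, `α = √(1 - c²/L²) ∈ (0,1)`, `u` is the unique
zero of `F`, `(u^n)` is the exact iteration and `(u_h^n)` a perturbed iteration with fineness
`η_h`, then `‖u - u_h^n‖ ≤ (αⁿ ‖u¹ - u⁰‖ + η_h)/(1 - α)` for all `n`. -/
theorem stmt4
    {X : Type*} [NormedAddCommGroup X] [InnerProductSpace ℝ X] [CompleteSpace X]
    (F : X → X) (L c : ℝ) (hL : 0 < L) (hc : 0 < c)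
    (hLip : ∀ x y : X, ‖F x - F y‖ ≤ L * ‖x - y‖)
    (hmono : ∀ x y : X, c * ‖x - y‖ ^ 2 ≤ ⟪F x - F y, x - y⟫)
    (B : X → X) (hBdef : ∀ x : X, B x = x - (c / L ^ 2) • F x)
    (α : ℝ) (hαdef : α = Real.sqrt (1 - c ^ 2 / L ^ 2)) (hα0 : 0 < α) (hα1 : α < 1)
    (u : X) (hu : F u = 0)
    (ηh : ℝ) (hη : 0 ≤ ηh)
    (useq uh : ℕ → X) (h0 : uh 0 = useq 0)
    (hiter : ∀ n, useq (n + 1) = B (useq n))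
    (hfine : ∀ n, ∀ v : X, |⟪B (uh n) - uh (n + 1), v⟫| ≤ ηh * ‖v‖) :
    ∀ n : ℕ,
      ‖u - uh n‖ ≤ (1 / (1 - α)) * (α ^ n * ‖useq 1 - useq 0‖ + ηh) := by
  have hL2 : (0:ℝ) < L ^ 2 := by positivity
  have hargnn : 0 ≤ 1 - c ^ 2 / L ^ 2 := by
    have := Real.sqrt_pos.mp (hαdef ▸ hα0)
    linarith
  have hα2 : α ^ 2 = 1 - c ^ 2 / L ^ 2 := by
    rw [hαdef, Real.sq_sqrt hargnn]
  -- contraction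
  have hcontr : ∀ x y : X, ‖B x - B y‖ ≤ α * ‖x - y‖ := by
    intro x y
    set k : ℝ := c / L ^ 2 with hk
    have hk0 : 0 < k := by positivity
    have hsq : ‖B x - B y‖ ^ 2 ≤ (α * ‖x - y‖) ^ 2 := by
      have hBxy : B x - B y = (x - y) - k • (F x - F y) := by
        rw [hBdef, hBdef, smul_sub]; abel
      rw [hBxy]
      have hexp : ‖(x - y) - k • (F x - F y)‖ ^ 2
          = ‖x - y‖ ^ 2 - 2 * (k * ⟪F x - F y, x - y⟫) + k ^ 2 * ‖F x - F y‖ ^ 2 := by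
        rw [norm_sub_sq_real, real_inner_smul_right, norm_smul, real_inner_comm]
        simp [mul_pow, abs_of_pos hk0]
      rw [hexp]
      have h1 : c * ‖x - y‖ ^ 2 ≤ ⟪F x - F y, x - y⟫ := hmono x y
      have h2 : ‖F x - F y‖ ^ 2 ≤ (L * ‖x - y‖) ^ 2 := by
        have := hLip x y
        nlinarith [norm_nonneg (F x - F y), norm_nonneg (x - y)]
      have hk2 : (0:ℝ) ≤ k ^ 2 := by positivity
      have h3 : k ^ 2 * ‖F x - F y‖ ^ 2 ≤ k ^ 2 * (L * ‖x - y‖) ^ 2 :=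
        mul_le_mul_of_nonneg_left h2 hk2
      have hkL : k ^ 2 * L ^ 2 = c ^ 2 / L ^ 2 := by
        field_simp [hk]
        rw [hk]; field_simp
      have hkc : 2 * (k * c) = 2 * (c ^ 2 / L ^ 2) := by
        field_simp [hk]
        rw [hk]; field_simp
      nlinarith [sq_nonneg ‖x - y‖]
    have h1 : 0 ≤ ‖B x - B y‖ := norm_nonneg _
    have h2 : 0 ≤ α * ‖x - y‖ := by positivity
    nlinarith
  -- u is a fixed point
  have hufix : B u = u := by
    rw [hBdef, hu, smul_zero, sub_zero]
  -- perturbation bound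
  have hpert : ∀ n, ‖B (uh n) - uh (n + 1)‖ ≤ ηh := by
    intro n
    rcases eq_or_ne (B (uh n) - uh (n + 1)) 0 with h | h
    · rw [h, norm_zero]; exact hη
    · have := hfine n (B (uh n) - uh (n + 1))
      rw [real_inner_self_eq_norm_sq, abs_of_nonneg (by positivity)] at this
      have hn : 0 < ‖B (uh n) - uh (n + 1)‖ := norm_pos_iff.mpr h
      nlinarith
  set d : ℝ := ‖useq 1 - useq 0‖ with hd
  have hdnn : 0 ≤ d := norm_nonneg _
  -- base bound : ‖u - useq 0‖ ≤ d / (1 - α)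
  have hbase : (1 - α) * ‖u - useq 0‖ ≤ d := by
    have h1 : ‖u - useq 0‖ ≤ ‖u - useq 1‖ + ‖useq 1 - useq 0‖ := norm_sub_le_norm_sub_add_norm_sub _ _ _
    have h2 : ‖u - useq 1‖ ≤ α * ‖u - useq 0‖ := by
      rw [hiter 0]
      calc ‖u - B (useq 0)‖ = ‖B u - B (useq 0)‖ := by rw [hufix]
        _ ≤ α * ‖u - useq 0‖ := hcontr _ _
    nlinarith [norm_nonneg (u - useq 0)]
  have h1α : (0:ℝ) < 1 - α := by linarith
  intro n
  induction n with
  | zero =>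
    rw [h0]
    simp only [pow_zero, one_mul]
    rw [div_mul_eq_mul_div, one_mul, le_div_iff₀ h1α]
    nlinarith [norm_nonneg (u - useq 0)]
  | succ n ih =>
    have step : ‖u - uh (n + 1)‖ ≤ α * ‖u - uh n‖ + ηh := by
      calc ‖u - uh (n + 1)‖ ≤ ‖u - B (uh n)‖ + ‖B (uh n) - uh (n + 1)‖ :=
            norm_sub_le_norm_sub_add_norm_sub _ _ _
        _ ≤ α * ‖u - uh n‖ + ηh := by
            refine add_le_add ?_ (hpert n)
            calc ‖u - B (uh n)‖ = ‖B u - B (uh n)‖ := by rw [hufix]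
              _ ≤ α * ‖u - uh n‖ := hcontr _ _
    have hαd : 0 ≤ α ^ n * d := by positivity
    calc ‖u - uh (n + 1)‖ ≤ α * ‖u - uh n‖ + ηh := step
      _ ≤ α * ((1 / (1 - α)) * (α ^ n * d + ηh)) + ηh :=
          add_le_add_left (mul_le_mul_of_nonneg_left ih hα0.le) _
      _ = (1 / (1 - α)) * (α ^ (n + 1) * d + ηh) := by
          field_simp
          ring
end

section
/- Let X be a (complete) real Hilbert space, let F : X → X be L-Lipschitz (L > 0) and strongly monotone with constant c > 0, set B(x) = x − (c/L²)·F(x) and α = √(1 − c²/L²), and assume α ∈ (0,1). Let η_h ≥ 0 and let (u^n) and (u_h^n) be sequences in X with u_h^0 = u^0, u^{n+1} = B(u^n) for all n, and |⟪B(u_h^n) − u_h^{n+1}, v⟫| ≤ η_h‖v‖ for all v ∈ X and all n. Then the residual satisfies ‖F(u_h^n)‖ ≤ (L/(1 − α))·(αⁿ·‖u¹ − u⁰‖ + η_h) for all n ∈ ℕ. -/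
open scoped RealInnerProductSpace

/-- Residual bound: under the assumptions of the a priori estimate, the residual satisfies
`‖F(u_h^n)‖ ≤ (L/(1 - α)) (αⁿ ‖u¹ - u⁰‖ + η_h)` for all `n`. -/
theorem stmt5
    {X : Type*} [NormedAddCommGroup X] [InnerProductSpace ℝ X] [CompleteSpace X]
    (F : X → X) (L c : ℝ) (hL : 0 < L) (hc : 0 < c)
    (hLip : ∀ x y : X, ‖F x - F y‖ ≤ L * ‖x - y‖)
    (hmono : ∀ x y : X, c * ‖x - y‖ ^ 2 ≤ ⟪F x - F y, x - y⟫)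
    (B : X → X) (hBdef : ∀ x : X, B x = x - (c / L ^ 2) • F x)
    (α : ℝ) (hαdef : α = Real.sqrt (1 - c ^ 2 / L ^ 2)) (hα0 : 0 < α) (hα1 : α < 1)
    (ηh : ℝ) (hη : 0 ≤ ηh)
    (useq uh : ℕ → X) (h0 : uh 0 = useq 0)
    (hiter : ∀ n, useq (n + 1) = B (useq n))
    (hfine : ∀ n, ∀ v : X, |⟪B (uh n) - uh (n + 1), v⟫| ≤ ηh * ‖v‖) :
    ∀ n : ℕ,
      ‖F (uh n)‖ ≤ (L / (1 - α)) * (α ^ n * ‖useq 1 - useq 0‖ + ηh) := by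
  have hL2 : (0:ℝ) < L ^ 2 := by positivity
  set k : ℝ := c / L ^ 2 with hk
  have hkpos : 0 < k := by positivity
  have hpos : 0 < 1 - c ^ 2 / L ^ 2 := Real.sqrt_pos.mp (hαdef ▸ hα0)
  have hα2 : α ^ 2 = 1 - c ^ 2 / L ^ 2 := by rw [hαdef, Real.sq_sqrt hpos.le]
  have h1α : 0 < 1 - α := by linarith
  -- contraction
  have hcontr : ∀ x y : X, ‖B x - B y‖ ≤ α * ‖x - y‖ := by
    intro x y
    have h1 : B x - B y = (x - y) - k • (F x - F y) := by
      rw [hBdef, hBdef, smul_sub]; abel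
    have hsq : ‖B x - B y‖ ^ 2 ≤ (α * ‖x - y‖) ^ 2 := by
      rw [h1, norm_sub_sq_real, real_inner_smul_right, norm_smul,
        Real.norm_eq_abs, abs_of_pos hkpos, real_inner_comm]
      have hm := hmono x y
      have hl := hLip x y
      have hl2 : ‖F x - F y‖ ^ 2 ≤ (L * ‖x - y‖) ^ 2 := by
        apply sq_le_sq' _ hl
        nlinarith [norm_nonneg (F x - F y)]
      have e1 : 2 * k * (c * ‖x - y‖ ^ 2) ≤ 2 * k * ⟪F x - F y, x - y⟫ :=
        mul_le_mul_of_nonneg_left hm (by positivity)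
      have e2 : (k * ‖F x - F y‖) ^ 2 ≤ k ^ 2 * (L * ‖x - y‖) ^ 2 := by
        rw [mul_pow]; exact mul_le_mul_of_nonneg_left hl2 (sq_nonneg k)
      have e1' : 2 * k * (c * ‖x - y‖ ^ 2) = 2 * (c ^ 2 / L ^ 2) * ‖x - y‖ ^ 2 := by
        rw [hk]; field_simp
      have e2' : k ^ 2 * (L * ‖x - y‖) ^ 2 = (c ^ 2 / L ^ 2) * ‖x - y‖ ^ 2 := by
        rw [hk]; field_simp
      have e3 : (α * ‖x - y‖) ^ 2 = (1 - c ^ 2 / L ^ 2) * ‖x - y‖ ^ 2 := by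
        rw [mul_pow, hα2]
      nlinarith [e1, e2, e1', e2', e3]
    have h2 := Real.sqrt_le_sqrt hsq
    rwa [Real.sqrt_sq (norm_nonneg _), Real.sqrt_sq (by positivity)] at h2
  -- fixed point
  haveI : Nonempty X := ⟨0⟩
  have hKlt : (⟨α, hα0.le⟩ : NNReal) < 1 := by exact_mod_cast hα1
  have hlipW : LipschitzWith ⟨α, hα0.le⟩ B :=
    LipschitzWith.of_dist_le_mul (fun x y => by
      rw [dist_eq_norm, dist_eq_norm]; exact hcontr x y)
  have hCW : ContractingWith ⟨α, hα0.le⟩ B := ⟨hKlt, hlipW⟩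
  set w : X := ContractingWith.fixedPoint B hCW with hw
  have hfix : B w = w := hCW.fixedPoint_isFixedPt
  have hFw : F w = 0 := by
    have h3 := hBdef w
    rw [hfix] at h3
    have h4 : k • F w = 0 := sub_eq_self.mp h3.symm
    rcases smul_eq_zero.mp h4 with h | h
    · exact absurd h (ne_of_gt hkpos)
    · exact h
  -- fineness in norm form
  have hres : ∀ n, ‖B (uh n) - uh (n + 1)‖ ≤ ηh := by
    intro n
    set v := B (uh n) - uh (n + 1) with hv
    have h5 := hfine n v
    rw [real_inner_self_eq_norm_sq, abs_of_nonneg (by positivity)] at h5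
    rcases (norm_nonneg v).eq_or_lt with h | h
    · rw [← h]; exact hη
    · nlinarith
  -- distance to fixed point bound
  have A0 : (0:ℝ) ≤ ‖useq 1 - useq 0‖ := norm_nonneg _
  have hub : ∀ n, ‖uh n - w‖ ≤ (α ^ n * ‖useq 1 - useq 0‖ + ηh) / (1 - α) := by
    intro n
    induction n with
    | zero =>
      rw [h0]
      have t1 : ‖useq 0 - w‖ ≤ ‖useq 0 - B (useq 0)‖ + ‖B (useq 0) - B w‖ := by
        calc ‖useq 0 - w‖ = ‖(useq 0 - B (useq 0)) + (B (useq 0) - B w)‖ := by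
              rw [hfix]; congr 1; abel
          _ ≤ _ := norm_add_le _ _
      have t2 : ‖useq 0 - B (useq 0)‖ = ‖useq 1 - useq 0‖ := by
        rw [← hiter 0, norm_sub_rev]
      have t3 := hcontr (useq 0) w
      rw [le_div_iff₀ h1α]
      nlinarith [hα0.le, norm_nonneg (useq 0 - w)]
    | succ n ih =>
      have t1 : ‖uh (n+1) - w‖ ≤ ‖uh (n+1) - B (uh n)‖ + ‖B (uh n) - B w‖ := by
        calc ‖uh (n+1) - w‖ = ‖(uh (n+1) - B (uh n)) + (B (uh n) - B w)‖ := by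
              rw [hfix]; congr 1; abel
          _ ≤ _ := norm_add_le _ _
      have t2 : ‖uh (n+1) - B (uh n)‖ ≤ ηh := by
        rw [norm_sub_rev]; exact hres n
      have t3 := hcontr (uh n) w
      have t4 : α * ‖uh n - w‖ ≤ α * ((α ^ n * ‖useq 1 - useq 0‖ + ηh) / (1 - α)) :=
        mul_le_mul_of_nonneg_left ih hα0.le
      have teq : ηh + α * ((α ^ n * ‖useq 1 - useq 0‖ + ηh) / (1 - α))
          = (α ^ (n+1) * ‖useq 1 - useq 0‖ + ηh) / (1 - α) := by
        field_simp
        ring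
      linarith
  intro n
  have hFn : ‖F (uh n)‖ ≤ L * ‖uh n - w‖ := by
    have := hLip (uh n) w
    rwa [hFw, sub_zero] at this
  have hfin : L * ((α ^ n * ‖useq 1 - useq 0‖ + ηh) / (1 - α))
      = (L / (1 - α)) * (α ^ n * ‖useq 1 - useq 0‖ + ηh) := by
    field_simp
  calc ‖F (uh n)‖ ≤ L * ‖uh n - w‖ := hFn
    _ ≤ L * ((α ^ n * ‖useq 1 - useq 0‖ + ηh) / (1 - α)) :=
        mul_le_mul_of_nonneg_left (hub n) hL.le
    _ = _ := hfin
end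

section
/- (A posteriori error bound) Let X be a (complete) real Hilbert space, let F : X → X be L-Lipschitz (L > 0) and strongly monotone with constant c > 0, set B(x) = x − (c/L²)·F(x), and let u ∈ X be the unique zero of F. Let η_h ≥ 0 and let (u_h^n)_{n≥0} be a sequence in X such that for every n and every v ∈ X one has |⟪B(u_h^n) − u_h^{n+1}, v⟫| ≤ η_h·‖v‖. Then for every n ≥ 0 the error e_h^{n+1} := u − u_h^{n+1} satisfies ‖e_h^{n+1}‖ ≤ (L²/c²)·η_h + (L/c)·(1 + L/c)·‖u_h^{n+1} − u_h^n‖. -/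
open scoped RealInnerProductSpace

/-- A posteriori error bound: if `F` is `L`-Lipschitz and `c`-strongly monotone,
`B x = x - (c/L²) • F x`, `u` is the unique zero of `F` and `(u_h^n)` satisfies the fineness
assumption with constant `η_h`, then
`‖u - u_h^{n+1}‖ ≤ (L²/c²) η_h + (L/c)(1 + L/c) ‖u_h^{n+1} - u_h^n‖` for all `n`. -/
theorem stmt6
    {X : Type*} [NormedAddCommGroup X] [InnerProductSpace ℝ X] [CompleteSpace X]
    (F : X → X) (L c : ℝ) (hL : 0 < L) (hc : 0 < c)
    (hLip : ∀ x y : X, ‖F x - F y‖ ≤ L * ‖x - y‖)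
    (hmono : ∀ x y : X, c * ‖x - y‖ ^ 2 ≤ ⟪F x - F y, x - y⟫)
    (B : X → X) (hBdef : ∀ x : X, B x = x - (c / L ^ 2) • F x)
    (u : X) (hu : F u = 0)
    (ηh : ℝ) (hη : 0 ≤ ηh)
    (uh : ℕ → X)
    (hfine : ∀ n, ∀ v : X, |⟪B (uh n) - uh (n + 1), v⟫| ≤ ηh * ‖v‖) :
    ∀ n : ℕ,
      ‖u - uh (n + 1)‖ ≤
        (L ^ 2 / c ^ 2) * ηh + (L / c) * (1 + L / c) * ‖uh (n + 1) - uh n‖ := by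
  intro n
  -- strong monotonicity + Cauchy-Schwarz: c‖x-y‖ ≤ ‖F x - F y‖
  have key : ∀ x y : X, c * ‖x - y‖ ≤ ‖F x - F y‖ := by
    intro x y
    rcases eq_or_ne (x - y) 0 with h | h
    · simp [h]
    · have h1 := hmono x y
      have h2 := real_inner_le_norm (F x - F y) (x - y)
      have hn : 0 < ‖x - y‖ := norm_pos_iff.mpr h
      nlinarith
  -- fineness gives a norm bound
  have hη' : ‖B (uh n) - uh (n + 1)‖ ≤ ηh := by
    rcases eq_or_ne (B (uh n) - uh (n + 1)) 0 with h | h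
    · simpa [h] using hη
    · have h1 := hfine n (B (uh n) - uh (n + 1))
      rw [real_inner_self_eq_norm_sq] at h1
      have hn : 0 < ‖B (uh n) - uh (n + 1)‖ := norm_pos_iff.mpr h
      have h2 : ‖B (uh n) - uh (n + 1)‖ ^ 2 ≤ ηh * ‖B (uh n) - uh (n + 1)‖ :=
        le_trans (le_abs_self _) h1
      nlinarith
  -- B is (1 + c/L)-Lipschitz
  have hBL : ∀ x y : X, ‖B x - B y‖ ≤ (1 + c / L) * ‖x - y‖ := by
    intro x y
    have hEq : B x - B y = (x - y) - (c / L ^ 2) • (F x - F y) := by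
      rw [hBdef, hBdef, smul_sub]; abel
    rw [hEq]
    have h1 : ‖(x - y) - (c / L ^ 2) • (F x - F y)‖ ≤
        ‖x - y‖ + ‖(c / L ^ 2) • (F x - F y)‖ := norm_sub_le _ _
    have h2 : ‖(c / L ^ 2) • (F x - F y)‖ = (c / L ^ 2) * ‖F x - F y‖ := by
      rw [norm_smul, Real.norm_eq_abs, abs_of_pos (by positivity)]
    have h3 := hLip x y
    have hL2 : (0:ℝ) < c / L ^ 2 := by positivity
    have h4 : (c / L ^ 2) * ‖F x - F y‖ ≤ (c / L ^ 2) * (L * ‖x - y‖) := by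
      exact mul_le_mul_of_nonneg_left h3 (le_of_lt hL2)
    have h5 : (c / L ^ 2) * (L * ‖x - y‖) = (c / L) * ‖x - y‖ := by
      field_simp
    nlinarith [norm_nonneg (x - y)]
  -- c ‖e‖ ≤ ‖F (uh (n+1))‖
  have h3 : c * ‖u - uh (n + 1)‖ ≤ ‖F (uh (n + 1))‖ := by
    have := key u (uh (n + 1))
    rwa [hu, zero_sub, norm_neg] at this
  -- (c/L²) ‖F (uh (n+1))‖ ≤ ηh + (1 + c/L) ‖uh (n+1) - uh n‖
  have h4 : (c / L ^ 2) * ‖F (uh (n + 1))‖ ≤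
      ηh + (1 + c / L) * ‖uh (n + 1) - uh n‖ := by
    have hEq : (c / L ^ 2) • F (uh (n + 1)) = uh (n + 1) - B (uh (n + 1)) := by
      rw [hBdef]; abel
    have hnorm : ‖(c / L ^ 2) • F (uh (n + 1))‖ = (c / L ^ 2) * ‖F (uh (n + 1))‖ := by
      rw [norm_smul, Real.norm_eq_abs, abs_of_pos (by positivity)]
    have htri : ‖uh (n + 1) - B (uh (n + 1))‖ ≤
        ‖uh (n + 1) - B (uh n)‖ + ‖B (uh n) - B (uh (n + 1))‖ :=
      norm_sub_le_norm_sub_add_norm_sub _ _ _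
    have h5 : ‖uh (n + 1) - B (uh n)‖ ≤ ηh := by
      rwa [norm_sub_rev]
    have h6 := hBL (uh n) (uh (n + 1))
    have h7 : ‖uh n - uh (n + 1)‖ = ‖uh (n + 1) - uh n‖ := norm_sub_rev _ _
    rw [← hnorm, hEq]
    rw [h7] at h6
    linarith
  -- combine
  have hFN : 0 ≤ ‖F (uh (n + 1))‖ := norm_nonneg _
  have hd : 0 ≤ ‖uh (n + 1) - uh n‖ := norm_nonneg _
  have h8 : ‖u - uh (n + 1)‖ ≤ (1 / c) * ‖F (uh (n + 1))‖ := by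
    rw [one_div, inv_mul_eq_div, le_div_iff₀ hc, mul_comm]
    exact h3
  have h9 : ‖F (uh (n + 1))‖ ≤ (L ^ 2 / c) * (ηh + (1 + c / L) * ‖uh (n + 1) - uh n‖) := by
    have hpos : (0:ℝ) < L ^ 2 / c := by positivity
    have := mul_le_mul_of_nonneg_left h4 (le_of_lt hpos)
    have hEq : (L ^ 2 / c) * ((c / L ^ 2) * ‖F (uh (n + 1))‖) = ‖F (uh (n + 1))‖ := by
      field_simp
    linarith [hEq ▸ this]
  have h10 : (1 / c) * ((L ^ 2 / c) * (ηh + (1 + c / L) * ‖uh (n + 1) - uh n‖)) =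
      (L ^ 2 / c ^ 2) * ηh + (L / c) * (1 + L / c) * ‖uh (n + 1) - uh n‖ := by
    field_simp; ring
  calc ‖u - uh (n + 1)‖ ≤ (1 / c) * ‖F (uh (n + 1))‖ := h8
    _ ≤ (1 / c) * ((L ^ 2 / c) * (ηh + (1 + c / L) * ‖uh (n + 1) - uh n‖)) := by
        apply mul_le_mul_of_nonneg_left h9 (by positivity)
    _ = _ := h10
end
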